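/- Let ABC be a triangle with all angles less than 120° and M its Fermat point (the interior point at which all three sides subtend 120°). Then for every point X in the plane, |MA| + |MB| + |MC| ≤ |XA| + |XB| + |XC|, with equality iff X = M. -/

import Mathlib

open EuclideanGeometry
open scoped RealInnerProductSpace

private lemma aux_zero {sa sb : ℝ} (q1 : sa ^ 2 = sa * sb * (-(1/2)))
    (q2 : sb ^ 2 = sa * sb * (-(1/2))) : sa = 0 := by
  nlinarith [sq_nonneg (sa + sb), sq_nonneg (sa - sb)]

private lemma cos_two_pi_div_three : Real.cos (2 * Real.pi / 3) = -(1/2) := by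
  have h : (2 : ℝ) * Real.pi / 3 = Real.pi - Real.pi / 3 := by ring
  rw [h, Real.cos_pi_sub, Real.cos_pi_div_three]

set_option maxHeartbeats 1000000 in
theorem fermat_point_minimizes (A B C M : EuclideanSpace ℝ (Fin 2))
    (hABC : AffineIndependent ℝ ![A, B, C])
    (hA : ∠ B A C < 2 * Real.pi / 3)
    (hB : ∠ A B C < 2 * Real.pi / 3)
    (hC : ∠ B C A < 2 * Real.pi / 3)
    (hMint : M ∈ interior (convexHull ℝ {A, B, C}))
    (hM1 : ∠ A M B = 2 * Real.pi / 3) (hM2 : ∠ B M C = 2 * Real.pi / 3)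
    (hM3 : ∠ C M A = 2 * Real.pi / 3) :
    ∀ X : EuclideanSpace ℝ (Fin 2),
      dist M A + dist M B + dist M C ≤ dist X A + dist X B + dist X C ∧
      (dist X A + dist X B + dist X C = dist M A + dist M B + dist M C ↔ X = M) := by
  have hpi := Real.pi_pos
  have h23 : (2 : ℝ) * Real.pi / 3 ≠ Real.pi / 2 := by intro h; nlinarith
  set a : EuclideanSpace ℝ (Fin 2) := A - M with ha'
  set b : EuclideanSpace ℝ (Fin 2) := B - M with hb'
  set c : EuclideanSpace ℝ (Fin 2) := C - M with hc'
  have hM1' : InnerProductGeometry.angle a b = 2 * Real.pi / 3 := hM1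
  have hM2' : InnerProductGeometry.angle b c = 2 * Real.pi / 3 := hM2
  have hM3' : InnerProductGeometry.angle c a = 2 * Real.pi / 3 := hM3
  have hane : a ≠ 0 := by
    intro h
    rw [h, InnerProductGeometry.angle_zero_left] at hM1'
    exact h23 hM1'.symm
  have hbne : b ≠ 0 := by
    intro h
    rw [h, InnerProductGeometry.angle_zero_left] at hM2'
    exact h23 hM2'.symm
  have hcne : c ≠ 0 := by
    intro h
    rw [h, InnerProductGeometry.angle_zero_left] at hM3'
    exact h23 hM3'.symm
  have hna : (0:ℝ) < ‖a‖ := norm_pos_iff.mpr hane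
  have hnb : (0:ℝ) < ‖b‖ := norm_pos_iff.mpr hbne
  have hnc : (0:ℝ) < ‖c‖ := norm_pos_iff.mpr hcne
  have inner_of_angle : ∀ x y : EuclideanSpace ℝ (Fin 2), x ≠ 0 → y ≠ 0 →
      InnerProductGeometry.angle x y = 2 * Real.pi / 3 →
      ⟪x, y⟫ = -(1/2) * (‖x‖ * ‖y‖) := by
    intro x y hx hy hxy
    have hcos := (InnerProductGeometry.cos_angle x y).symm
    rw [hxy, cos_two_pi_div_three] at hcos
    have hnx : (0:ℝ) < ‖x‖ := norm_pos_iff.mpr hx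
    have hny : (0:ℝ) < ‖y‖ := norm_pos_iff.mpr hy
    have hne : ‖x‖ * ‖y‖ ≠ 0 := (mul_pos hnx hny).ne'
    exact (div_eq_iff hne).mp hcos
  have hab : ⟪a, b⟫ = -(1/2) * (‖a‖ * ‖b‖) := inner_of_angle a b hane hbne hM1'
  have hbc : ⟪b, c⟫ = -(1/2) * (‖b‖ * ‖c‖) := inner_of_angle b c hbne hcne hM2'
  have hca : ⟪c, a⟫ = -(1/2) * (‖c‖ * ‖a‖) := inner_of_angle c a hcne hane hM3'
  set ua : EuclideanSpace ℝ (Fin 2) := ‖a‖⁻¹ • a with hua'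
  set ub : EuclideanSpace ℝ (Fin 2) := ‖b‖⁻¹ • b with hub'
  set uc : EuclideanSpace ℝ (Fin 2) := ‖c‖⁻¹ • c with huc'
  have hnua : ‖ua‖ = 1 := by
    rw [hua', norm_smul, norm_inv, norm_norm, inv_mul_cancel₀ hna.ne']
  have hnub : ‖ub‖ = 1 := by
    rw [hub', norm_smul, norm_inv, norm_norm, inv_mul_cancel₀ hnb.ne']
  have hnuc : ‖uc‖ = 1 := by
    rw [huc', norm_smul, norm_inv, norm_norm, inv_mul_cancel₀ hnc.ne']
  have huab : ⟪ua, ub⟫ = -(1/2) := by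
    rw [hua', hub', real_inner_smul_left, real_inner_smul_right, hab]
    field_simp
  have hubc : ⟪ub, uc⟫ = -(1/2) := by
    rw [hub', huc', real_inner_smul_left, real_inner_smul_right, hbc]
    field_simp
  have huca : ⟪uc, ua⟫ = -(1/2) := by
    rw [huc', hua', real_inner_smul_left, real_inner_smul_right, hca]
    field_simp
  have haa : ⟪ua, ua⟫ = 1 := by
    rw [real_inner_self_eq_norm_sq, hnua]; norm_num
  have hbb : ⟪ub, ub⟫ = 1 := by
    rw [real_inner_self_eq_norm_sq, hnub]; norm_num
  have hcc : ⟪uc, uc⟫ = 1 := by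
    rw [real_inner_self_eq_norm_sq, hnuc]; norm_num
  -- the three unit vectors sum to zero
  have hsum : ua + ub + uc = 0 := by
    have h0 : ⟪ua + ub + uc, ua + ub + uc⟫ = 0 := by
      have e1 : ⟪ub, ua⟫ = -(1/2) := by rw [real_inner_comm]; exact huab
      have e2 : ⟪uc, ub⟫ = -(1/2) := by rw [real_inner_comm]; exact hubc
      have e3 : ⟪ua, uc⟫ = -(1/2) := by rw [real_inner_comm]; exact huca
      simp only [inner_add_left, inner_add_right]
      linarith [haa, hbb, hcc, huab, hubc, huca, e1, e2, e3]
    exact inner_self_eq_zero.mp h0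
  have hinner_a : ⟪a, ua⟫ = ‖a‖ := by
    rw [hua', real_inner_smul_right, real_inner_self_eq_norm_sq]
    field_simp
  have hinner_b : ⟪b, ub⟫ = ‖b‖ := by
    rw [hub', real_inner_smul_right, real_inner_self_eq_norm_sq]
    field_simp
  have hinner_c : ⟪c, uc⟫ = ‖c‖ := by
    rw [huc', real_inner_smul_right, real_inner_self_eq_norm_sq]
    field_simp
  have hdMA : dist M A = ‖a‖ := by rw [dist_eq_norm, ha', ← norm_neg]; congr 1; abel
  have hdMB : dist M B = ‖b‖ := by rw [dist_eq_norm, hb', ← norm_neg]; congr 1; abel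
  have hdMC : dist M C = ‖c‖ := by rw [dist_eq_norm, hc', ← norm_neg]; congr 1; abel
  intro X
  -- key pointwise bounds
  have keyA : ⟪A - X, ua⟫ ≤ dist X A := by
    calc ⟪A - X, ua⟫ ≤ ‖A - X‖ * ‖ua‖ := real_inner_le_norm _ _
    _ = dist X A := by rw [hnua, mul_one, dist_eq_norm, ← norm_neg]; congr 1; abel
  have keyB : ⟪B - X, ub⟫ ≤ dist X B := by
    calc ⟪B - X, ub⟫ ≤ ‖B - X‖ * ‖ub‖ := real_inner_le_norm _ _
    _ = dist X B := by rw [hnub, mul_one, dist_eq_norm, ← norm_neg]; congr 1; abel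
  have keyC : ⟪C - X, uc⟫ ≤ dist X C := by
    calc ⟪C - X, uc⟫ ≤ ‖C - X‖ * ‖uc‖ := real_inner_le_norm _ _
    _ = dist X C := by rw [hnuc, mul_one, dist_eq_norm, ← norm_neg]; congr 1; abel
  have expandA : ⟪A - X, ua⟫ = ‖a‖ + ⟪M - X, ua⟫ := by
    have : A - X = a + (M - X) := by rw [ha']; abel
    rw [this, inner_add_left, hinner_a]
  have expandB : ⟪B - X, ub⟫ = ‖b‖ + ⟪M - X, ub⟫ := by
    have : B - X = b + (M - X) := by rw [hb']; abel
    rw [this, inner_add_left, hinner_b]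
  have expandC : ⟪C - X, uc⟫ = ‖c‖ + ⟪M - X, uc⟫ := by
    have : C - X = c + (M - X) := by rw [hc']; abel
    rw [this, inner_add_left, hinner_c]
  have hsum_inner : ⟪M - X, ua⟫ + ⟪M - X, ub⟫ + ⟪M - X, uc⟫ = 0 := by
    rw [← inner_add_right, ← inner_add_right, hsum, inner_zero_right]
  have hineq : dist M A + dist M B + dist M C ≤ dist X A + dist X B + dist X C := by
    rw [hdMA, hdMB, hdMC]
    have h1 := keyA; have h2 := keyB; have h3 := keyC
    rw [expandA] at h1; rw [expandB] at h2; rw [expandC] at h3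
    linarith
  refine ⟨hineq, ?_, ?_⟩
  · -- equality implies X = M
    intro hEq
    have h1 := keyA; have h2 := keyB; have h3 := keyC
    rw [expandA] at h1; rw [expandB] at h2; rw [expandC] at h3
    rw [hdMA, hdMB, hdMC] at hEq
    have e1 : ⟪A - X, ua⟫ = dist X A := by
      rw [expandA]; linarith
    have e2 : ⟪B - X, ub⟫ = dist X B := by
      rw [expandB]; linarith
    -- from equality in Cauchy–Schwarz, A - X = ‖A - X‖ • ua
    have coll : ∀ (v u : EuclideanSpace ℝ (Fin 2)), ‖u‖ = 1 → ⟪v, u⟫ = ‖v‖ →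
        v = ‖v‖ • u := by
      intro v u hu hvu
      have h0 : ‖v - ‖v‖ • u‖ ^ 2 = 0 := by
        rw [norm_sub_sq_real, real_inner_smul_right, hvu, norm_smul, hu,
          Real.norm_eq_abs, abs_of_nonneg (norm_nonneg v)]
        ring
      have h1 := pow_eq_zero_iff (n := 2) (by norm_num) |>.mp h0
      exact sub_eq_zero.mp (norm_eq_zero.mp h1)

    have cA : A - X = ‖A - X‖ • ua := by
      apply coll _ _ hnua
      rw [e1, dist_eq_norm, ← norm_neg]; congr 1; abel
    have cB : B - X = ‖B - X‖ • ub := by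
      apply coll _ _ hnub
      rw [e2, dist_eq_norm, ← norm_neg]; congr 1; abel
    -- X - M as multiple of ua and of ub
    have haua : a = ‖a‖ • ua := by
      rw [hua', smul_smul, mul_inv_cancel₀ hna.ne', one_smul]
    have hbub : b = ‖b‖ • ub := by
      rw [hub', smul_smul, mul_inv_cancel₀ hnb.ne', one_smul]
    have hXa' : X - M = (‖a‖ - ‖A - X‖) • ua := by
      have h : X - M = a - (A - X) := by rw [ha']; abel
      rw [h, sub_smul, ← haua, ← cA]
    have hXb' : X - M = (‖b‖ - ‖B - X‖) • ub := by
      have h : X - M = b - (B - X) := by rw [hb']; abel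
      rw [h, sub_smul, ← hbub, ← cB]
    obtain ⟨sa, hXa⟩ : ∃ s : ℝ, X - M = s • ua := ⟨_, hXa'⟩
    obtain ⟨sb, hXb⟩ : ∃ s : ℝ, X - M = s • ub := ⟨_, hXb'⟩
    have hn2 : ⟪X - M, X - M⟫ = sa * sb * (-(1/2)) := by
      nth_rewrite 1 [hXa]
      nth_rewrite 1 [hXb]
      rw [real_inner_smul_left, real_inner_smul_right, huab]
      ring
    have hsa2 : ⟪X - M, X - M⟫ = sa ^ 2 := by
      nth_rewrite 1 [hXa]; nth_rewrite 1 [hXa]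
      rw [real_inner_smul_left, real_inner_smul_right, haa]
      ring
    have hsb2 : ⟪X - M, X - M⟫ = sb ^ 2 := by
      nth_rewrite 1 [hXb]; nth_rewrite 1 [hXb]
      rw [real_inner_smul_left, real_inner_smul_right, hbb]
      ring
    have q1 : sa ^ 2 = sa * sb * (-(1/2)) := by rw [← hsa2, hn2]
    have q2 : sb ^ 2 = sa * sb * (-(1/2)) := by rw [← hsb2, hn2]
    have hsa0 : sa = 0 := aux_zero q1 q2
    have : X - M = 0 := by rw [hXa, hsa0]; simp
    exact sub_eq_zero.mp this
  · rintro rfl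
    rfl
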